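/- Let A be a unital ring, a, b_1,...,b_n ∈ A, and m ∈ ℕ. Then a^m · b_1 ⋯ b_n = ∑_{α ∈ ℕ^n, |α| ≤ m} (m! / (α! (m - |α|)!)) · ad_a^{α_1}(b_1) ⋯ ad_a^{α_n}(b_n) · a^{m - |α|}, where ad_a(x) = a·x - x·a and ad_a^{α_j} its α_j-fold iterate. -/

import Mathlib

open Finset in
theorem adpow (A : Type*) [Ring A] (a x : A) (m : ℕ) :
    a ^ m * x = ∑ i ∈ Finset.range (m + 1),
      m.choose i • ((fun y => a * y - y * a)^[i] x * a ^ (m - i)) := by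
  set ℓ : AddMonoid.End A := AddMonoidHom.mulLeft a with hℓ
  set r : AddMonoid.End A := AddMonoidHom.mulRight a with hr
  have hcomm : Commute (ℓ - r) r := by
    apply Commute.sub_left _ (Commute.refl r)
    apply AddMonoidHom.ext
    intro x
    show a * (x * a) = (a * x) * a
    rw [mul_assoc]
  have key := hcomm.add_pow m
  rw [sub_add_cancel] at key
  have hl : ∀ k (y : A), (ℓ ^ k) y = a ^ k * y := by
    intro k y
    induction k with
    | zero => simp
    | succ k ih =>
      rw [pow_succ']
      show ℓ ((ℓ ^ k) y) = a ^ (k + 1) * y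
      rw [ih]
      show a * (a ^ k * y) = _
      rw [pow_succ', mul_assoc]
  have hrp : ∀ k (y : A), (r ^ k) y = y * a ^ k := by
    intro k y
    induction k with
    | zero => simp
    | succ k ih =>
      rw [pow_succ']
      show r ((r ^ k) y) = y * a ^ (k + 1)
      rw [ih]
      show (y * a ^ k) * a = _
      rw [pow_succ, mul_assoc]
  have hsub : ∀ k (y : A), ((ℓ - r) ^ k) y = (fun y => a * y - y * a)^[k] y := by
    intro k y
    induction k with
    | zero => simp
    | succ k ih =>
      rw [pow_succ', Function.iterate_succ_apply']
      show (ℓ - r) (((ℓ - r) ^ k) y) = _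
      rw [ih]
      show a * _ - _ * a = _
      rfl
  have h2 := DFunLike.congr_fun key x
  rw [hl] at h2
  rw [h2]
  erw [AddMonoidHom.finset_sum_apply]
  refine Finset.sum_congr rfl fun i hi => ?_
  rw [(hcomm.pow_pow i (m - i)).eq]
  show (r ^ (m - i)) (((ℓ - r) ^ i) ((m.choose i : AddMonoid.End A) x)) = _
  rw [AddMonoid.End.natCast_apply, map_nsmul, map_nsmul, hsub, hrp]
open Finset Nat

theorem coeff_step (m i s P : ℕ) (him : i ≤ m) (hs : s ≤ m - i) (hP : P ∣ s !) :
    m ! / ((i ! * P) * (m - i - s)!) = m.choose i * ((m - i)! / (P * ((m - i) - s)!)) := by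
  have hdvd : P * ((m - i) - s)! ∣ (m - i)! :=
    dvd_trans (mul_dvd_mul hP dvd_rfl) (Nat.factorial_mul_factorial_dvd_factorial hs)
  set M := (m - i)! / (P * ((m - i) - s)!) with hMdef
  have hM : P * ((m - i) - s)! * M = (m - i)! := Nat.mul_div_cancel' hdvd
  have hD : 0 < (i ! * P) * (m - i - s)! := by
    have hP0 : 0 < P := Nat.pos_of_dvd_of_pos hP (Nat.factorial_pos s)
    positivity
  refine Nat.div_eq_of_eq_mul_left hD ?_
  have h1 : m.choose i * i ! * (m - i)! = m ! := Nat.choose_mul_factorial_mul_factorial him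
  calc m ! = m.choose i * i ! * (m - i)! := h1.symm
    _ = m.choose i * i ! * (P * ((m - i) - s)! * M) := by rw [hM]
    _ = m.choose i * M * (i ! * P * (m - i - s)!) := by ring

def Tset (n m : ℕ) : Finset (Fin n → ℕ) :=
  (Fintype.piFinset fun _ => Finset.range (m + 1)).filter fun α => ∑ j, α j ≤ m

theorem mem_Tset {n m : ℕ} {α : Fin n → ℕ} : α ∈ Tset n m ↔ ∑ j, α j ≤ m := by
  simp only [Tset, Finset.mem_filter, Fintype.mem_piFinset, Finset.mem_range, Nat.lt_succ_iff]
  refine ⟨fun h => h.2, fun h => ⟨fun j => le_trans ?_ h, h⟩⟩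
  exact Finset.single_le_sum (f := α) (fun i _ => Nat.zero_le _) (Finset.mem_univ j)

theorem Tset_eq (n m : ℕ) :
    Tset n m = (Finset.range (m + 1)).biUnion fun k => Finset.Nat.antidiagonalTuple n k := by
  ext α
  simp only [mem_Tset, Finset.mem_biUnion, Finset.Nat.mem_antidiagonalTuple, Finset.mem_range,
    Nat.lt_succ_iff]
  exact ⟨fun h => ⟨_, h, rfl⟩, fun ⟨k, hk, he⟩ => he ▸ hk⟩

theorem AT_disj (n m : ℕ) : ∀ k ∈ (Finset.range (m+1) : Finset ℕ), ∀ k' ∈ (Finset.range (m+1) : Finset ℕ),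
    k ≠ k' → Disjoint (Finset.Nat.antidiagonalTuple n k) (Finset.Nat.antidiagonalTuple n k') := by
  intro k _ k' _ hne
  refine Finset.disjoint_left.mpr fun α h1 h2 => hne ?_
  rw [Finset.Nat.mem_antidiagonalTuple] at h1 h2
  rw [← h1, ← h2]

def consEmb (n i : ℕ) : (Fin n → ℕ) ↪ (Fin (n + 1) → ℕ) where
  toFun τ := Fin.cons i τ
  inj' := Fin.cons_right_injective (α := fun _ => ℕ) i

theorem Tset_succ (n m : ℕ) :
    Tset (n + 1) m = (Finset.range (m + 1)).biUnion fun i => (Tset n (m - i)).map (consEmb n i) := by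
  ext β
  simp only [mem_Tset, Finset.mem_biUnion, Finset.mem_map, Finset.mem_range, Nat.lt_succ_iff,
    consEmb, Function.Embedding.coeFn_mk]
  constructor
  · intro h
    rw [Fin.sum_univ_succ] at h
    refine ⟨β 0, le_trans (Nat.le_add_right _ _) h, Fin.tail β, ?_, Fin.cons_self_tail β⟩
    have he : ∑ j : Fin n, Fin.tail β j = ∑ i : Fin n, β i.succ := rfl
    omega
  · rintro ⟨i, hi, τ, hτ, rfl⟩
    rw [Fin.sum_univ_succ]
    simp only [Fin.cons_zero, Fin.cons_succ]
    omega

theorem consEmb_disj (n m : ℕ) : ∀ i ∈ (Finset.range (m+1) : Finset ℕ), ∀ i' ∈ (Finset.range (m+1) : Finset ℕ),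
    i ≠ i' → Disjoint ((Tset n (m - i)).map (consEmb n i)) ((Tset n (m - i')).map (consEmb n i')) := by
  intro i _ i' _ hne
  refine Finset.disjoint_left.mpr fun β h1 h2 => hne ?_
  simp only [Finset.mem_map, consEmb, Function.Embedding.coeFn_mk] at h1 h2
  obtain ⟨τ, _, rfl⟩ := h1
  obtain ⟨τ', _, he⟩ := h2
  have := congrFun he 0
  simpa using this.symm

theorem aux_sum (A : Type*) [Ring A] (a : A) : ∀ (n : ℕ) (b : Fin n → A) (m : ℕ),
    a ^ m * (List.ofFn b).prod =
      ∑ α ∈ Tset n m,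
        (m.factorial / ((∏ j, (α j).factorial) * (m - ∑ j, α j).factorial)) •
          ((List.ofFn fun j => (fun x => a * x - x * a)^[α j] (b j)).prod *
            a ^ (m - ∑ j, α j)) := by
  intro n
  induction n with
  | zero =>
    intro b m
    have hT : Tset 0 m = {fun i => i.elim0} := by
      apply Finset.eq_singleton_iff_unique_mem.mpr
      exact ⟨mem_Tset.mpr (by simp), fun α _ => funext fun i => i.elim0⟩
    rw [hT, Finset.sum_singleton]
    simp [Nat.div_self (Nat.factorial_pos m)]
  | succ n ih =>
    intro b m
    rw [List.ofFn_succ, List.prod_cons, ← mul_assoc, adpow A a (b 0) m, Finset.sum_mul,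
        Tset_succ, Finset.sum_biUnion (consEmb_disj n m)]
    refine Finset.sum_congr rfl fun i hi => ?_
    rw [Finset.mem_range, Nat.lt_succ_iff] at hi
    rw [Finset.sum_map, smul_mul_assoc, mul_assoc, ih (fun j => b j.succ) (m - i),
        Finset.mul_sum, Finset.smul_sum]
    refine Finset.sum_congr rfl fun τ hτ => ?_
    rw [mem_Tset] at hτ
    simp only [consEmb, Function.Embedding.coeFn_mk, Fin.sum_univ_succ, Fin.cons_zero,
      Fin.cons_succ, Fin.prod_univ_succ, List.ofFn_succ, List.prod_cons]
    rw [← Nat.sub_sub,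
      coeff_step m i (∑ j, τ j) (∏ j, (τ j).factorial) hi hτ
        (Nat.prod_factorial_dvd_factorial_sum _ _),
      mul_smul, mul_smul_comm, mul_assoc]

/-- In a unital ring, for `a, b₁,…,bₙ` and `m ∈ ℕ`,
`aᵐ b₁ ⋯ bₙ = ∑_{|α| ≤ m} (m!/(α!(m-|α|)!)) ad_a^{α₁}(b₁) ⋯ ad_a^{αₙ}(bₙ) a^{m-|α|}`.
The sum over `|α| ≤ m` is organized as a sum over `k = |α| ≤ m` and multiindices
`α` with `|α| = k`. -/
theorem pow_mul_list_eq_sum_ad (A : Type*) [Ring A] (n : ℕ) (a : A)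
    (b : Fin n → A) (m : ℕ) :
    a ^ m * (List.ofFn b).prod =
      ∑ k ∈ Finset.range (m + 1), ∑ α ∈ Finset.Nat.antidiagonalTuple n k,
        (m.factorial / ((∏ j, (α j).factorial) * (m - k).factorial)) •
          ((List.ofFn fun j => (fun x => a * x - x * a)^[α j] (b j)).prod *
            a ^ (m - k)) := by
  rw [aux_sum A a n b m, Tset_eq, Finset.sum_biUnion (AT_disj n m)]
  refine Finset.sum_congr rfl fun k hk => Finset.sum_congr rfl fun α hα => ?_
  rw [Finset.Nat.mem_antidiagonalTuple] at hα
  rw [hα]
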